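/- Let h be holomorphic on ℂᵐ and g holomorphic on ℂⁿ, and suppose there are real-valued functions μ, ν with Σᵢⱼ conj(∂²h/∂zᵢ∂zⱼ) · (∂h/∂zᵢ)(∂h/∂zⱼ) = μ·h and Σ_{αβ} conj(∂²g/∂w_α∂w_β) · (∂g/∂w_α)(∂g/∂w_β) = ν·g. Then H(z,w) := h(z)g(w) satisfies Σ_{k,l} conj(∂²H)·(∂H)(∂H) = (μ|g|² + ν|h|² + 2|∇_z h|²|∇_w g|²)·H, where the sum runs over all m+n complex variables; in particular H satisfies the same type of identity with a real-valued multiplier. -/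

import Mathlib

open Complex

lemma prod_fderiv {E₁ E₂ : Type*} [NormedAddCommGroup E₁] [NormedSpace ℂ E₁]
    [NormedAddCommGroup E₂] [NormedSpace ℂ E₂]
    {F : E₁ → ℂ} {G : E₂ → ℂ} (hF : Differentiable ℂ F) (hG : Differentiable ℂ G)
    (p : E₁ × E₂) (v : E₁ × E₂) :
    fderiv ℂ (fun q : E₁ × E₂ => F q.1 * G q.2) p v
      = fderiv ℂ F p.1 v.1 * G p.2 + F p.1 * fderiv ℂ G p.2 v.2 := by
  have h1 : HasFDerivAt (fun q : E₁ × E₂ => F q.1)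
      ((fderiv ℂ F p.1).comp (ContinuousLinearMap.fst ℂ E₁ E₂)) p :=
    (hF p.1).hasFDerivAt.comp p hasFDerivAt_fst
  have h2 : HasFDerivAt (fun q : E₁ × E₂ => G q.2)
      ((fderiv ℂ G p.2).comp (ContinuousLinearMap.snd ℂ E₁ E₂)) p :=
    (hG p.2).hasFDerivAt.comp p hasFDerivAt_snd
  rw [HasFDerivAt.fderiv (f := fun q : E₁ × E₂ => F q.1 * G q.2) (h1.mul h2)]
  simp
  ring


/-- Products of ℝ-holomorphic functions: if `h ∈ 𝒯ᵐ` with multiplier `μ` and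
`g ∈ 𝒯ⁿ` with multiplier `ν`, then `H (z, w) = h z * g w` satisfies the analogous
identity in the `m + n` complex variables with the real-valued multiplier
`μ |g|² + ν |h|² + 2 |∇_z h|² |∇_w g|²`. -/
theorem stmt_6 (m n : ℕ)
    (h : (Fin m → ℂ) → ℂ) (g : (Fin n → ℂ) → ℂ)
    (hdiff : Differentiable ℂ h) (hdiff2 : Differentiable ℂ (fun z => fderiv ℂ h z))
    (gdiff : Differentiable ℂ g) (gdiff2 : Differentiable ℂ (fun w => fderiv ℂ g w))
    (μ : (Fin m → ℂ) → ℝ) (ν : (Fin n → ℂ) → ℝ)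
    (hμ : ∀ z, ∑ i : Fin m, ∑ j : Fin m,
        (starRingEnd ℂ) (fderiv ℂ (fun z' => fderiv ℂ h z' (Pi.single i 1)) z (Pi.single j 1))
          * fderiv ℂ h z (Pi.single i 1) * fderiv ℂ h z (Pi.single j 1)
        = (μ z : ℂ) * h z)
    (hν : ∀ w, ∑ α : Fin n, ∑ β : Fin n,
        (starRingEnd ℂ) (fderiv ℂ (fun w' => fderiv ℂ g w' (Pi.single α 1)) w (Pi.single β 1))
          * fderiv ℂ g w (Pi.single α 1) * fderiv ℂ g w (Pi.single β 1)
        = (ν w : ℂ) * g w) :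
    ∀ z : Fin m → ℂ, ∀ w : Fin n → ℂ,
      (let H : (Fin m → ℂ) × (Fin n → ℂ) → ℂ := fun p => h p.1 * g p.2
       let e : Fin m ⊕ Fin n → (Fin m → ℂ) × (Fin n → ℂ) :=
         Sum.elim (fun i => (Pi.single i 1, 0)) (fun α => (0, Pi.single α 1))
       ∑ k : Fin m ⊕ Fin n, ∑ l : Fin m ⊕ Fin n,
          (starRingEnd ℂ) (fderiv ℂ (fun p => fderiv ℂ H p (e k)) (z, w) (e l))
            * fderiv ℂ H (z, w) (e k) * fderiv ℂ H (z, w) (e l)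
        = ((μ z * ‖g w‖ ^ 2 + ν w * ‖h z‖ ^ 2
            + 2 * (∑ i : Fin m, ‖fderiv ℂ h z (Pi.single i 1)‖ ^ 2)
                * (∑ α : Fin n, ‖fderiv ℂ g w (Pi.single α 1)‖ ^ 2) : ℝ) : ℂ)
          * H (z, w)) := by
  intro z w
  dsimp only
  -- differentiability of directional derivatives
  have hcl : ∀ i : Fin m, Differentiable ℂ (fun z' => fderiv ℂ h z' (Pi.single i 1)) :=
    fun i => hdiff2.clm_apply (differentiable_const _)
  have gcl : ∀ α : Fin n, Differentiable ℂ (fun w' => fderiv ℂ g w' (Pi.single α 1)) :=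
    fun α => gdiff2.clm_apply (differentiable_const _)
  -- first derivatives of H in the coordinate directions
  have D1 : ∀ p : (Fin m → ℂ) × (Fin n → ℂ), ∀ i : Fin m,
      fderiv ℂ (fun q : (Fin m → ℂ) × (Fin n → ℂ) => h q.1 * g q.2) p
        ((Pi.single i 1 : Fin m → ℂ), (0 : Fin n → ℂ))
      = fderiv ℂ h p.1 (Pi.single i 1) * g p.2 := by
    intro p i
    rw [prod_fderiv hdiff gdiff]
    simp
  have D2 : ∀ p : (Fin m → ℂ) × (Fin n → ℂ), ∀ α : Fin n,
      fderiv ℂ (fun q : (Fin m → ℂ) × (Fin n → ℂ) => h q.1 * g q.2) p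
        ((0 : Fin m → ℂ), (Pi.single α 1 : Fin n → ℂ))
      = h p.1 * fderiv ℂ g p.2 (Pi.single α 1) := by
    intro p α
    rw [prod_fderiv hdiff gdiff]
    simp
  have E1 : ∀ i : Fin m,
      (fun p : (Fin m → ℂ) × (Fin n → ℂ) =>
        fderiv ℂ (fun q : (Fin m → ℂ) × (Fin n → ℂ) => h q.1 * g q.2) p
          ((Pi.single i 1 : Fin m → ℂ), (0 : Fin n → ℂ)))
      = fun p => (fderiv ℂ h p.1 (Pi.single i 1)) * g p.2 :=
    fun i => funext fun p => D1 p i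
  have E2 : ∀ α : Fin n,
      (fun p : (Fin m → ℂ) × (Fin n → ℂ) =>
        fderiv ℂ (fun q : (Fin m → ℂ) × (Fin n → ℂ) => h q.1 * g q.2) p
          ((0 : Fin m → ℂ), (Pi.single α 1 : Fin n → ℂ)))
      = fun p => h p.1 * fderiv ℂ g p.2 (Pi.single α 1) :=
    fun α => funext fun p => D2 p α
  -- second derivatives
  have d2ll : ∀ i j : Fin m,
      fderiv ℂ (fun p : (Fin m → ℂ) × (Fin n → ℂ) =>
          fderiv ℂ (fun q : (Fin m → ℂ) × (Fin n → ℂ) => h q.1 * g q.2) p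
            ((Pi.single i 1 : Fin m → ℂ), (0 : Fin n → ℂ))) (z, w)
        ((Pi.single j 1 : Fin m → ℂ), (0 : Fin n → ℂ))
      = fderiv ℂ (fun z' => fderiv ℂ h z' (Pi.single i 1)) z (Pi.single j 1) * g w := by
    intro i j
    rw [E1 i, prod_fderiv (hcl i) gdiff]
    simp
  have d2lr : ∀ (i : Fin m) (β : Fin n),
      fderiv ℂ (fun p : (Fin m → ℂ) × (Fin n → ℂ) =>
          fderiv ℂ (fun q : (Fin m → ℂ) × (Fin n → ℂ) => h q.1 * g q.2) p
            ((Pi.single i 1 : Fin m → ℂ), (0 : Fin n → ℂ))) (z, w)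
        ((0 : Fin m → ℂ), (Pi.single β 1 : Fin n → ℂ))
      = fderiv ℂ h z (Pi.single i 1) * fderiv ℂ g w (Pi.single β 1) := by
    intro i β
    rw [E1 i, prod_fderiv (hcl i) gdiff]
    simp
  have d2rl : ∀ (α : Fin n) (j : Fin m),
      fderiv ℂ (fun p : (Fin m → ℂ) × (Fin n → ℂ) =>
          fderiv ℂ (fun q : (Fin m → ℂ) × (Fin n → ℂ) => h q.1 * g q.2) p
            ((0 : Fin m → ℂ), (Pi.single α 1 : Fin n → ℂ))) (z, w)
        ((Pi.single j 1 : Fin m → ℂ), (0 : Fin n → ℂ))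
      = fderiv ℂ h z (Pi.single j 1) * fderiv ℂ g w (Pi.single α 1) := by
    intro α j
    rw [E2 α, prod_fderiv hdiff (gcl α)]
    simp
  have d2rr : ∀ (α β : Fin n),
      fderiv ℂ (fun p : (Fin m → ℂ) × (Fin n → ℂ) =>
          fderiv ℂ (fun q : (Fin m → ℂ) × (Fin n → ℂ) => h q.1 * g q.2) p
            ((0 : Fin m → ℂ), (Pi.single α 1 : Fin n → ℂ))) (z, w)
        ((0 : Fin m → ℂ), (Pi.single β 1 : Fin n → ℂ))
      = h z * fderiv ℂ (fun w' => fderiv ℂ g w' (Pi.single α 1)) w (Pi.single β 1) := by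
    intro α β
    rw [E2 α, prod_fderiv hdiff (gcl α)]
    simp
  simp only [Fintype.sum_sum_type, Sum.elim_inl, Sum.elim_inr, Finset.sum_add_distrib]
  simp only [d2ll, d2lr, d2rl, d2rr]
  simp only [D1 (z, w), D2 (z, w)]
  have cm : ∀ x : ℂ, (starRingEnd ℂ) x * x = ((‖x‖ : ℝ) : ℂ) ^ 2 := by
    intro x
    rw [mul_comm, Complex.mul_conj, Complex.normSq_eq_norm_sq]
    push_cast
    ring
  set a : Fin m → ℂ := fun i => fderiv ℂ h z (Pi.single i 1) with ha
  set b : Fin n → ℂ := fun α => fderiv ℂ g w (Pi.single α 1) with hb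
  have T1 : ∑ i : Fin m, ∑ j : Fin m,
      (starRingEnd ℂ) (fderiv ℂ (fun z' => fderiv ℂ h z' (Pi.single i 1)) z (Pi.single j 1) * g w)
        * (a i * g w) * (a j * g w)
      = ((μ z : ℂ) * h z) * (((‖g w‖ : ℝ) : ℂ) ^ 2 * g w) := by
    have : ∑ i : Fin m, ∑ j : Fin m,
        (starRingEnd ℂ) (fderiv ℂ (fun z' => fderiv ℂ h z' (Pi.single i 1)) z (Pi.single j 1) * g w)
          * (a i * g w) * (a j * g w)
        = (∑ i : Fin m, ∑ j : Fin m,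
            (starRingEnd ℂ) (fderiv ℂ (fun z' => fderiv ℂ h z' (Pi.single i 1)) z (Pi.single j 1))
              * a i * a j) * (((starRingEnd ℂ) (g w) * g w) * g w) := by
      rw [Finset.sum_mul]
      refine Finset.sum_congr rfl fun i _ => ?_
      rw [Finset.sum_mul]
      refine Finset.sum_congr rfl fun j _ => ?_
      simp only [map_mul]
      ring
    rw [this, hμ z, cm]
  have T4 : ∑ α : Fin n, ∑ β : Fin n,
      (starRingEnd ℂ) (h z * fderiv ℂ (fun w' => fderiv ℂ g w' (Pi.single α 1)) w (Pi.single β 1))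
        * (h z * b α) * (h z * b β)
      = ((ν w : ℂ) * g w) * (((‖h z‖ : ℝ) : ℂ) ^ 2 * h z) := by
    have : ∑ α : Fin n, ∑ β : Fin n,
        (starRingEnd ℂ) (h z * fderiv ℂ (fun w' => fderiv ℂ g w' (Pi.single α 1)) w (Pi.single β 1))
          * (h z * b α) * (h z * b β)
        = (∑ α : Fin n, ∑ β : Fin n,
            (starRingEnd ℂ) (fderiv ℂ (fun w' => fderiv ℂ g w' (Pi.single α 1)) w (Pi.single β 1))
              * b α * b β) * (((starRingEnd ℂ) (h z) * h z) * h z) := by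
      rw [Finset.sum_mul]
      refine Finset.sum_congr rfl fun α _ => ?_
      rw [Finset.sum_mul]
      refine Finset.sum_congr rfl fun β _ => ?_
      simp only [map_mul]
      ring
    rw [this, hν w, cm]
  have sa : ∑ i : Fin m, (starRingEnd ℂ) (a i) * a i
      = ((∑ i : Fin m, ‖a i‖ ^ 2 : ℝ) : ℂ) := by
    push_cast
    exact Finset.sum_congr rfl fun i _ => cm (a i)
  have sb : ∑ α : Fin n, (starRingEnd ℂ) (b α) * b α
      = ((∑ α : Fin n, ‖b α‖ ^ 2 : ℝ) : ℂ) := by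
    push_cast
    exact Finset.sum_congr rfl fun α _ => cm (b α)
  have T2 : ∑ i : Fin m, ∑ β : Fin n,
      (starRingEnd ℂ) (a i * b β) * (a i * g w) * (h z * b β)
      = ((∑ i : Fin m, ‖a i‖ ^ 2 : ℝ) : ℂ)
        * ((∑ α : Fin n, ‖b α‖ ^ 2 : ℝ) : ℂ) * (h z * g w) := by
    rw [← sa, ← sb, Finset.sum_mul_sum, Finset.sum_mul]
    refine Finset.sum_congr rfl fun i _ => ?_
    rw [Finset.sum_mul]
    refine Finset.sum_congr rfl fun β _ => ?_
    simp only [map_mul]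
    ring
  have T3 : ∑ α : Fin n, ∑ j : Fin m,
      (starRingEnd ℂ) (a j * b α) * (h z * b α) * (a j * g w)
      = ((∑ i : Fin m, ‖a i‖ ^ 2 : ℝ) : ℂ)
        * ((∑ α : Fin n, ‖b α‖ ^ 2 : ℝ) : ℂ) * (h z * g w) := by
    rw [Finset.sum_comm, ← T2]
    exact Finset.sum_congr rfl fun j _ => Finset.sum_congr rfl fun α _ => by ring
  rw [T1, T2, T3, T4]
  push_cast
  ring
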